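/- Pentagon equation (simply-laced case, eq. (gvu) of the paper): if u, v ∈ A satisfy u·v = q²·v·u, then Ψ_q^{(1)}(v) · Ψ_q^{(1)}(u) = Ψ_q^{(1)}(u) · Ψ_q^{(2)}(q⁻¹·u·v) · Ψ_q^{(1)}(v) in A[[T]]. -/

import Mathlib

open Finset

namespace PentagonAux
variable {K : Type*} [Field K]
noncomputable def DD (q : K) (n : ℕ) : K := ∏ k ∈ Finset.Icc 1 n, (1 - q ^ (2 * k))
noncomputable def cc (q : K) (n : ℕ) : K := q ^ (n ^ 2) / DD q n
noncomputable def ee (q : K) (a b : ℕ) : K := cc q a * cc q b / cc q (a + b)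
variable {q : K} (hq0 : q ≠ 0) (hq : ∀ n : ℕ, 1 ≤ n → q ^ n ≠ 1)

lemma DD_succ (n : ℕ) : DD q (n + 1) = DD q n * (1 - q ^ (2 * (n + 1))) := by
  rw [DD, DD, Finset.prod_Icc_succ_top (by omega)]

include hq in
lemma DD_ne (n : ℕ) : DD q n ≠ 0 := by
  rw [DD]
  apply Finset.prod_ne_zero_iff.mpr
  intro k hk
  have hk1 : 1 ≤ k := (Finset.mem_Icc.mp hk).1
  exact fun h => hq (2 * k) (by omega) (by linear_combination -h)

include hq in
lemma one_sub_ne (m : ℕ) : (1 : K) - q ^ (2 * (m + 1)) ≠ 0 :=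
  fun h => hq (2 * (m + 1)) (by omega) (by linear_combination -h)

include hq0 hq in
lemma cc_ne (n : ℕ) : cc q n ≠ 0 :=
  div_ne_zero (pow_ne_zero _ hq0) (DD_ne hq n)

lemma cc_zero : cc q 0 = 1 := by simp [cc, DD]

include hq0 hq in
lemma ee_zero_left (b : ℕ) : ee q 0 b = 1 := by
  rw [ee, cc_zero, one_mul, Nat.zero_add, div_self (cc_ne hq0 hq b)]

include hq0 hq in
lemma ee_zero_right (a : ℕ) : ee q a 0 = 1 := by
  rw [ee, cc_zero, mul_one, Nat.add_zero, div_self (cc_ne hq0 hq a)]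

include hq0 hq in
lemma cc_mul_ee (a b : ℕ) : cc q (a + b) * ee q a b = cc q a * cc q b := by
  rw [ee, mul_comm, div_mul_cancel₀ _ (cc_ne hq0 hq (a + b))]

include hq in
lemma cc_rec (n : ℕ) : (1 - q ^ (2 * (n + 1))) * cc q (n + 1) = q ^ (2 * n + 1) * cc q n := by
  rw [cc, cc, DD_succ]
  rw [mul_div_assoc', mul_div_assoc',
    div_eq_div_iff (mul_ne_zero (DD_ne hq n) (one_sub_ne hq n)) (DD_ne hq n)]
  ring

include hq0 hq in
lemma pascal_poly (a b : ℕ) :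
    q ^ (2 * a + 2 * b + 3) * (cc q (a + 1) * cc q (b + 1) * cc q (a + b + 1)) =
      (q ^ (2 * a + 2 * b + 3) * (cc q a * cc q (b + 1)) +
        q ^ (2 * b + 1) * (cc q (a + 1) * cc q b)) * cc q (a + b + 1 + 1) := by
  have R1 := cc_rec hq a
  have R2 := cc_rec hq b
  have R3 := cc_rec hq (a + b + 1)
  linear_combination (q ^ (2 * b + 2) * cc q (b + 1) * cc q (a + b + 1 + 1)) * R1 +
    (cc q (a + 1) * cc q (a + b + 1 + 1)) * R2 - (cc q (a + 1) * cc q (b + 1)) * R3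

include hq0 hq in
lemma ee_pascal (a b : ℕ) :
    ee q (a + 1) (b + 1) = ee q a (b + 1) + (q ^ (2 * (a + 1)))⁻¹ * ee q (a + 1) b := by
  have e1 : a + 1 + (b + 1) = a + b + 1 + 1 := by omega
  have e2 : a + (b + 1) = a + b + 1 := by omega
  have e3 : a + 1 + b = a + b + 1 := by omega
  rw [ee, ee, ee, e1, e2, e3]
  have h1 := cc_ne hq0 hq (a + b + 1)
  have h2 := cc_ne hq0 hq (a + b + 1 + 1)
  have key := pascal_poly hq0 hq a b
  field_simp
  apply mul_left_cancel₀ (pow_ne_zero (2 * b + 1) hq0)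
  linear_combination key

section Series
open PowerSeries
variable {A : Type*} [Ring A] [Algebra K A]

lemma coeffK_smul (r : K) (F : PowerSeries A) (n : ℕ) :
    coeff n (r • F) = r • coeff n F := rfl

/-- truncated sum -/
noncomputable def Pf (f : ℕ → K) (M : ℕ) (X : PowerSeries A) : PowerSeries A :=
  ∑ n ∈ Finset.range M, f n • X ^ n

/-- the formal series `∑ f n • X^n` -/
noncomputable def Gf (f : ℕ → K) (X : PowerSeries A) : PowerSeries A :=
  PowerSeries.mk fun N => ∑ n ∈ Finset.range (N + 1), f n • coeff N (X ^ n)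

lemma coeff_Pf (f : ℕ → K) (M : ℕ) (X : PowerSeries A) (i : ℕ) :
    coeff i (Pf f M X) = ∑ n ∈ Finset.range M, f n • coeff i (X ^ n) := by
  rw [Pf, map_sum]
  exact Finset.sum_congr rfl fun n _ => coeffK_smul ..

lemma coeff_pow_eq_zero {X : PowerSeries A} (hX : coeff 0 X = 0) :
    ∀ {n N : ℕ}, N < n → coeff N (X ^ n) = 0 := by
  intro n
  induction n with
  | zero => omega
  | succ n ih =>
    intro N hN
    rw [pow_succ, coeff_mul]
    apply Finset.sum_eq_zero
    intro p hp
    have hp' := Finset.HasAntidiagonal.mem_antidiagonal.mp hp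
    rcases Nat.eq_zero_or_pos p.2 with h0 | h0
    · have h1 : p.2 = 0 := h0
      rw [h1, hX, mul_zero]
    · rw [ih (show p.1 < n by omega), zero_mul]

lemma coeff_mul_pow_eq_zero {X Y : PowerSeries A} (hX : coeff 0 X = 0)
    (hY : coeff 0 Y = 0) {a b N : ℕ} (h : N < a + b) :
    coeff N (X ^ a * Y ^ b) = 0 := by
  rw [coeff_mul]
  apply Finset.sum_eq_zero
  intro p hp
  have hp' := Finset.HasAntidiagonal.mem_antidiagonal.mp hp
  rcases Nat.lt_or_ge p.1 a with h1 | h1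
  · rw [coeff_pow_eq_zero hX h1, zero_mul]
  · rw [coeff_pow_eq_zero hY (show p.2 < b by omega), mul_zero]

/-- congruence modulo `T^(N+1)` -/
def EqMod (N : ℕ) (F G : PowerSeries A) : Prop := ∀ i ≤ N, coeff i F = coeff i G

lemma EqMod.refl {N : ℕ} (F : PowerSeries A) : EqMod N F F := fun _ _ => rfl

lemma EqMod.symm {N : ℕ} {F G : PowerSeries A} (h : EqMod N F G) : EqMod N G F :=
  fun i hi => (h i hi).symm

lemma EqMod.coeff {N : ℕ} {F G : PowerSeries A} (h : EqMod N F G) :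
    coeff N F = coeff N G := h N le_rfl

lemma EqMod.mul {N : ℕ} {F F' G G' : PowerSeries A} (h : EqMod N F F')
    (h' : EqMod N G G') : EqMod N (F * G) (F' * G') := by
  intro i hi
  rw [coeff_mul, coeff_mul]
  apply Finset.sum_congr rfl
  intro p hp
  have hp' := Finset.HasAntidiagonal.mem_antidiagonal.mp hp
  rw [h p.1 (by omega), h' p.2 (by omega)]

lemma eqMod_Gf_Pf {X : PowerSeries A} (hX : coeff 0 X = 0) (f : ℕ → K) (N : ℕ) :
    EqMod N (Gf f X) (Pf f (N + 1) X) := by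
  intro i hi
  rw [coeff_Pf, Gf, coeff_mk]
  apply Finset.sum_subset (Finset.range_subset_range.mpr (by omega))
  intro n _ hn
  rw [coeff_pow_eq_zero hX (by simp at hn ⊢; omega), smul_zero]


lemma sum_triangle {α : Type*} [AddCommMonoid α] (M : ℕ) (g : ℕ → ℕ → α)
    (hg : ∀ a b, M ≤ a + b → g a b = 0) :
    ∑ n ∈ Finset.range M, ∑ a ∈ Finset.range (n + 1), g a (n - a)
      = ∑ a ∈ Finset.range M, ∑ b ∈ Finset.range M, g a b := by
  rw [← Finset.sum_product']
  rw [Finset.sum_sigma']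
  rw [← Finset.sum_filter_add_sum_filter_not (Finset.range M ×ˢ Finset.range M)
    (fun p => p.1 + p.2 < M)]
  have hz : ∑ p ∈ (Finset.range M ×ˢ Finset.range M).filter (fun p => ¬ p.1 + p.2 < M),
      g p.1 p.2 = 0 := by
    apply Finset.sum_eq_zero
    intro p hp
    have := (Finset.mem_filter.mp hp).2
    exact hg p.1 p.2 (by omega)
  rw [hz, add_zero]
  apply Finset.sum_nbij' (i := fun x => (x.2, x.1 - x.2)) (j := fun p => ⟨p.1 + p.2, p.1⟩)
  · intro x hx
    simp only [Finset.mem_sigma, Finset.mem_range] at hx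
    simp only [Finset.mem_filter, Finset.mem_product, Finset.mem_range]
    omega
  · intro p hp
    simp only [Finset.mem_filter, Finset.mem_product, Finset.mem_range] at hp
    simp only [Finset.mem_sigma, Finset.mem_range]
    omega
  · intro x hx
    simp only [Finset.mem_sigma, Finset.mem_range] at hx
    obtain ⟨n, a⟩ := x
    simp only at hx ⊢
    have h1 : a + (n - a) = n := by omega
    rw [h1]
  · intro p hp
    simp
  · intro x hx
    rfl

section QBinom
variable {B : Type*} [Ring B] [Algebra K B]
variable (hq0 : q ≠ 0) (hq : ∀ n : ℕ, 1 ≤ n → q ^ n ≠ 1)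

include hq0 in
lemma pow_qcomm {X Y : B} (h : X * Y = (q ^ 2) • (Y * X)) (n : ℕ) :
    Y ^ n * X = (q ^ (2 * n))⁻¹ • (X * Y ^ n) := by
  have base : Y * X = (q ^ 2)⁻¹ • (X * Y) := by
    rw [h, smul_smul, inv_mul_cancel₀ (pow_ne_zero 2 hq0), one_smul]
  induction n with
  | zero => simp
  | succ n ih =>
    have hs : (q ^ 2)⁻¹ * (q ^ (2 * n))⁻¹ = (q ^ (2 * (n + 1)))⁻¹ := by
      have h2 : 2 * (n + 1) = 2 + 2 * n := by omega
      rw [h2, pow_add, mul_inv]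
    rw [pow_succ, mul_assoc, base, mul_smul_comm, ← mul_assoc, ih, smul_mul_assoc,
      smul_smul, hs, mul_assoc]

include hq0 in
lemma pow_qcomm' {X Y : B} (h : X * Y = (q ^ 2) • (Y * X)) (a : ℕ) :
    Y * X ^ a = (q ^ (2 * a))⁻¹ • (X ^ a * Y) := by
  have base : Y * X = (q ^ 2)⁻¹ • (X * Y) := by
    rw [h, smul_smul, inv_mul_cancel₀ (pow_ne_zero 2 hq0), one_smul]
  induction a with
  | zero => simp
  | succ a ih =>
    have hs : (q ^ (2 * a))⁻¹ * (q ^ 2)⁻¹ = (q ^ (2 * (a + 1)))⁻¹ := by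
      have h2 : 2 * (a + 1) = 2 * a + 2 := by omega
      rw [h2, pow_add, mul_inv]
    rw [pow_succ, ← mul_assoc, ih, smul_mul_assoc, mul_assoc, base, mul_smul_comm,
      smul_smul, hs, ← mul_assoc, ← pow_succ]

include hq0 hq in
lemma qbinom {X Y : B} (h : X * Y = (q ^ 2) • (Y * X)) (n : ℕ) :
    (X + Y) ^ n = ∑ a ∈ Finset.range (n + 1), ee q a (n - a) • (X ^ a * Y ^ (n - a)) := by
  induction n with
  | zero =>
    rw [pow_zero, Finset.range_one, Finset.sum_singleton, ee_zero_left hq0 hq, pow_zero,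
      pow_zero, one_mul, one_smul]

  | succ n ih =>
    have hstep : (X + Y) ^ (n + 1) = X * (X + Y) ^ n + Y * (X + Y) ^ n := by
      rw [pow_succ', add_mul]
    rw [hstep, ih, Finset.mul_sum, Finset.mul_sum]
    have hT1 : ∀ a ∈ Finset.range (n + 1),
        X * (ee q a (n - a) • (X ^ a * Y ^ (n - a)))
          = ee q a (n - a) • (X ^ (a + 1) * Y ^ (n - a)) := by
      intro a _
      rw [mul_smul_comm, ← mul_assoc, ← pow_succ']
    have hT2 : ∀ a ∈ Finset.range (n + 1),
        Y * (ee q a (n - a) • (X ^ a * Y ^ (n - a)))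
          = (ee q a (n - a) * (q ^ (2 * a))⁻¹) • (X ^ a * Y ^ (n - a + 1)) := by
      intro a _
      rw [mul_smul_comm, ← mul_assoc, pow_qcomm' hq0 h a, smul_mul_assoc, mul_assoc,
        ← pow_succ', smul_smul]
    rw [Finset.sum_congr rfl hT1, Finset.sum_congr rfl hT2]
    have hR : ∑ a ∈ Finset.range (n + 1 + 1), ee q a (n + 1 - a) • (X ^ a * Y ^ (n + 1 - a))
        = (∑ a ∈ Finset.range (n + 1), ee q (a + 1) (n - a) • (X ^ (a + 1) * Y ^ (n - a)))
          + ee q 0 (n + 1) • (X ^ 0 * Y ^ (n + 1)) := by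
      rw [Finset.sum_range_succ']
      congr 1
      apply Finset.sum_congr rfl
      intro a _
      have h1 : n + 1 - (a + 1) = n - a := by omega
      rw [h1]
    have hA2 : ∑ a ∈ Finset.range (n + 1),
          (ee q a (n - a) * (q ^ (2 * a))⁻¹) • (X ^ a * Y ^ (n - a + 1))
        = (∑ a ∈ Finset.range n,
            (ee q (a + 1) (n - (a + 1)) * (q ^ (2 * (a + 1)))⁻¹) • (X ^ (a + 1) * Y ^ (n - (a + 1) + 1)))
          + ee q 0 (n + 1) • (X ^ 0 * Y ^ (n + 1)) := by
      rw [Finset.sum_range_succ']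
      congr 1
      simp [ee_zero_left hq0 hq]
    have hA1 : ∑ a ∈ Finset.range (n + 1), ee q a (n - a) • (X ^ (a + 1) * Y ^ (n - a))
        = (∑ a ∈ Finset.range n, ee q a (n - a) • (X ^ (a + 1) * Y ^ (n - a)))
          + X ^ (n + 1) := by
      rw [Finset.sum_range_succ, Nat.sub_self, ee_zero_right hq0 hq, one_smul, pow_zero,
        mul_one]
    have hRm : ∑ a ∈ Finset.range (n + 1), ee q (a + 1) (n - a) • (X ^ (a + 1) * Y ^ (n - a))
        = (∑ a ∈ Finset.range n, ee q (a + 1) (n - a) • (X ^ (a + 1) * Y ^ (n - a)))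
          + X ^ (n + 1) := by
      rw [Finset.sum_range_succ, Nat.sub_self, ee_zero_right hq0 hq, one_smul, pow_zero,
        mul_one]
    rw [hR, hRm, hA1, hA2]
    have hmain : ∑ a ∈ Finset.range n, ee q (a + 1) (n - a) • (X ^ (a + 1) * Y ^ (n - a))
        = (∑ a ∈ Finset.range n, ee q a (n - a) • (X ^ (a + 1) * Y ^ (n - a)))
          + ∑ a ∈ Finset.range n,
            (ee q (a + 1) (n - (a + 1)) * (q ^ (2 * (a + 1)))⁻¹) • (X ^ (a + 1) * Y ^ (n - (a + 1) + 1)) := by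
      rw [← Finset.sum_add_distrib]
      apply Finset.sum_congr rfl
      intro a ha
      have halt : a < n := Finset.mem_range.mp ha
      have h1 : n - (a + 1) + 1 = n - a := by omega
      have h2 : n - a = (n - (a + 1)) + 1 := by omega
      rw [h1]
      rw [← add_smul]
      congr 1
      rw [h2, ee_pascal hq0 hq a (n - (a + 1)), mul_comm ((q ^ (2 * (a + 1)))⁻¹)]
    rw [hmain]
    abel

end QBinom

section Main
variable {A : Type*} [Ring A] [Algebra K A]
variable (hq0 : q ≠ 0) (hq : ∀ n : ℕ, 1 ≤ n → q ^ n ≠ 1)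
open PowerSeries

include hq0 hq in
lemma Gf_mul_Gf {X Y : PowerSeries A} (hX : coeff 0 X = 0) (hY : coeff 0 Y = 0)
    (h : X * Y = (q ^ 2) • (Y * X)) :
    Gf (cc q) X * Gf (cc q) Y = Gf (cc q) (X + Y) := by
  ext N
  have hXY : coeff 0 (X + Y) = 0 := by rw [map_add, hX, hY, add_zero]
  rw [((eqMod_Gf_Pf hX (cc q) N).mul (eqMod_Gf_Pf hY (cc q) N)).coeff,
    (eqMod_Gf_Pf hXY (cc q) N).coeff]
  have hL : Pf (cc q) (N + 1) X * Pf (cc q) (N + 1) Y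
      = ∑ a ∈ Finset.range (N + 1), ∑ b ∈ Finset.range (N + 1),
          (cc q a * cc q b) • (X ^ a * Y ^ b) := by
    rw [Pf, Pf, Finset.sum_mul_sum]
    exact Finset.sum_congr rfl fun a _ => Finset.sum_congr rfl fun b _ =>
      smul_mul_smul_comm ..
  have hR : Pf (cc q) (N + 1) (X + Y)
      = ∑ n ∈ Finset.range (N + 1), ∑ a ∈ Finset.range (n + 1),
          (cc q a * cc q (n - a)) • (X ^ a * Y ^ (n - a)) := by
    rw [Pf]
    apply Finset.sum_congr rfl
    intro n hn
    rw [qbinom hq0 hq h n, Finset.smul_sum]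
    apply Finset.sum_congr rfl
    intro a ha
    have han : a + (n - a) = n := by
      have := Finset.mem_range.mp ha; omega
    have hce : cc q n * ee q a (n - a) = cc q a * cc q (n - a) := by
      have h' := cc_mul_ee hq0 hq a (n - a)
      rw [han] at h'
      exact h'
    rw [smul_smul, hce]
  rw [hL, hR]
  simp only [map_sum]
  exact (sum_triangle (N + 1) (fun a b => coeff N ((cc q a * cc q b) • (X ^ a * Y ^ b)))
    (fun a b hab => by
      show coeff N ((cc q a * cc q b) • (X ^ a * Y ^ b)) = 0
      rw [coeffK_smul, coeff_mul_pow_eq_zero hX hY (by omega), smul_zero])).symm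

include hq0 in
lemma Pf_mul_right {X Y : PowerSeries A} (h : X * Y = (q ^ 2) • (Y * X)) (M : ℕ) :
    Pf (cc q) M Y * X = X * Pf (fun n => cc q n * (q ^ (2 * n))⁻¹) M Y := by
  rw [Pf, Pf, Finset.sum_mul, Finset.mul_sum]
  apply Finset.sum_congr rfl
  intro n _
  rw [smul_mul_assoc, pow_qcomm hq0 h n, mul_smul_comm, smul_smul]

include hq0 hq in
lemma cc_rec_inv (n : ℕ) :
    cc q (n + 1) * (q ^ (2 * (n + 1)))⁻¹ = cc q (n + 1) + q⁻¹ * cc q n := by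
  have R := cc_rec hq n
  field_simp
  linear_combination q * R

include hq0 hq in
lemma Gf_twist {Y : PowerSeries A} (hY : coeff 0 Y = 0) :
    Gf (fun n => cc q n * (q ^ (2 * n))⁻¹) Y = (1 + q⁻¹ • Y) * Gf (cc q) Y := by
  ext N
  rw [(eqMod_Gf_Pf hY (fun n => cc q n * (q ^ (2 * n))⁻¹) N).coeff,
    ((EqMod.refl (1 + q⁻¹ • Y)).mul (eqMod_Gf_Pf hY (cc q) N)).coeff]
  have hsplit : (1 + q⁻¹ • Y) * Pf (cc q) (N + 1) Y
      = Pf (cc q) (N + 1) Y + ∑ n ∈ Finset.range (N + 1), (q⁻¹ * cc q n) • Y ^ (n + 1) := by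
    rw [add_mul, one_mul]
    congr 1
    rw [Pf, Finset.mul_sum]
    apply Finset.sum_congr rfl
    intro n _
    rw [smul_mul_assoc, mul_smul_comm, smul_smul, ← pow_succ']
  rw [hsplit, map_add, coeff_Pf, coeff_Pf, map_sum]
  have hlast : ∑ n ∈ Finset.range (N + 1), coeff N ((q⁻¹ * cc q n) • Y ^ (n + 1))
      = ∑ n ∈ Finset.range N, (q⁻¹ * cc q n) • coeff N (Y ^ (n + 1)) := by
    rw [Finset.sum_range_succ, coeffK_smul, coeff_pow_eq_zero hY (by omega), smul_zero,
      add_zero]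
    exact Finset.sum_congr rfl fun n _ => coeffK_smul ..
  rw [hlast, Finset.sum_range_succ' (fun n => (cc q n * (q ^ (2 * n))⁻¹) • coeff N (Y ^ n)) N,
    Finset.sum_range_succ' (fun n => cc q n • coeff N (Y ^ n)) N]
  have h0 : (cc q 0 * (q ^ (2 * 0))⁻¹) • coeff N (Y ^ 0) = cc q 0 • coeff N (Y ^ 0) := by
    norm_num
  rw [h0, add_right_comm, ← Finset.sum_add_distrib]
  congr 1
  apply Finset.sum_congr rfl
  intro n _
  show (cc q (n + 1) * (q ^ (2 * (n + 1)))⁻¹) • coeff N (Y ^ (n + 1))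
      = cc q (n + 1) • coeff N (Y ^ (n + 1)) + (q⁻¹ * cc q n) • coeff N (Y ^ (n + 1))
  rw [cc_rec_inv hq0 hq n, add_smul]

include hq0 hq in
lemma Gf_mul_X {X Y : PowerSeries A} (hY : coeff 0 Y = 0)
    (h : X * Y = (q ^ 2) • (Y * X)) :
    Gf (cc q) Y * X = (X + q⁻¹ • (X * Y)) * Gf (cc q) Y := by
  have hstep : Gf (cc q) Y * X = X * Gf (fun n => cc q n * (q ^ (2 * n))⁻¹) Y := by
    ext N
    rw [((eqMod_Gf_Pf hY (cc q) N).mul (EqMod.refl X)).coeff,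
      ((EqMod.refl X).mul (eqMod_Gf_Pf hY (fun n => cc q n * (q ^ (2 * n))⁻¹) N)).coeff,
      Pf_mul_right hq0 h (N + 1)]
  rw [hstep, Gf_twist hq0 hq hY, ← mul_assoc, mul_add, mul_one, mul_smul_comm]

include hq0 hq in
lemma Gf_mul_pow {X Y : PowerSeries A} (hY : coeff 0 Y = 0)
    (h : X * Y = (q ^ 2) • (Y * X)) (n : ℕ) :
    Gf (cc q) Y * X ^ n = (X + q⁻¹ • (X * Y)) ^ n * Gf (cc q) Y := by
  induction n with
  | zero => rw [pow_zero, pow_zero, mul_one, one_mul]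
  | succ n ih =>
    rw [pow_succ, pow_succ, ← mul_assoc, ih, mul_assoc, Gf_mul_X hq0 hq hY h, ← mul_assoc]

include hq0 hq in
lemma Gf_swap {X Y : PowerSeries A} (hX : coeff 0 X = 0) (hY : coeff 0 Y = 0)
    (h : X * Y = (q ^ 2) • (Y * X)) :
    Gf (cc q) Y * Gf (cc q) X = Gf (cc q) (X + q⁻¹ • (X * Y)) * Gf (cc q) Y := by
  have hZ : coeff 0 (X + q⁻¹ • (X * Y)) = 0 := by
    have h0 : coeff 0 (X * Y) = 0 := by
      rw [coeff_mul]
      simp [hX]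
    rw [map_add, hX, coeffK_smul, h0, smul_zero, add_zero]
  ext N
  rw [((EqMod.refl (Gf (cc q) Y)).mul (eqMod_Gf_Pf hX (cc q) N)).coeff]
  have hmid : Gf (cc q) Y * Pf (cc q) (N + 1) X
      = Pf (cc q) (N + 1) (X + q⁻¹ • (X * Y)) * Gf (cc q) Y := by
    rw [Pf, Pf, Finset.mul_sum, Finset.sum_mul]
    apply Finset.sum_congr rfl
    intro n _
    rw [mul_smul_comm, Gf_mul_pow hq0 hq hY h n, smul_mul_assoc]
  rw [hmid, ((eqMod_Gf_Pf hZ (cc q) N).symm.mul (EqMod.refl (Gf (cc q) Y))).coeff]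

lemma monomial_mul_monomial' (m n : ℕ) (a b : A) :
    (monomial m a) * (monomial n b) = monomial (m + n) (a * b) := by
  have := MvPowerSeries.monomial_mul_monomial (R := A)
    (Finsupp.single () m) (Finsupp.single () n) a b
  simpa [PowerSeries.monomial, ← Finsupp.single_add] using this

lemma monomial_pow' (m : ℕ) (a : A) (n : ℕ) :
    (monomial m a) ^ n = monomial (n * m) (a ^ n) := by
  induction n with
  | zero => simp
  | succ n ih =>
    rw [pow_succ, ih, monomial_mul_monomial', ← pow_succ]
    congr 1
    rw [Nat.succ_mul]

lemma monomial_smul' (r : K) (n : ℕ) (a : A) :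
    monomial n (r • a) = r • monomial n a := by
  ext i
  rw [coeffK_smul, coeff_monomial, coeff_monomial]
  split_ifs with h
  · rfl
  · rw [smul_zero]

end Main
end Series
end PentagonAux

/-- The formal quantum dilogarithm series
`Ψ_p⁽ᵐ⁾(a) = Σ_{n≥0} (p^{n²} / ∏_{k=1}^{n}(1 − p^{2k})) aⁿ T^{mn}`
in the formal power series ring `A[[T]]`. -/
noncomputable def Psi {K : Type*} [Field K] (A : Type*) [Ring A] [Algebra K A]
    (p : K) (m : ℕ) (a : A) : PowerSeries A :=
  PowerSeries.mk fun n =>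
    if m ∣ n then
      (p ^ ((n / m) ^ 2) / ∏ k ∈ Finset.Icc 1 (n / m), (1 - p ^ (2 * k))) • a ^ (n / m)
    else 0

namespace PentagonAux
section Psi
open PowerSeries
variable {K : Type*} [Field K] {q : K} (hq0 : q ≠ 0) (hq : ∀ n : ℕ, 1 ≤ n → q ^ n ≠ 1)
variable {A : Type*} [Ring A] [Algebra K A]

lemma Psi_eq_Gf {m : ℕ} (hm : m ≠ 0) (a : A) :
    Psi A q m a = Gf (cc q) (monomial m a) := by
  ext N
  rw [Psi, coeff_mk, Gf, coeff_mk]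
  have hterm : ∀ n, cc q n • coeff N ((monomial m a) ^ n)
      = cc q n • (if N = n * m then a ^ n else 0) := by
    intro n
    rw [monomial_pow', coeff_monomial]
  by_cases hdvd : m ∣ N
  · rw [if_pos hdvd]
    have hmem : N / m ∈ Finset.range (N + 1) :=
      Finset.mem_range.mpr (by have := Nat.div_le_self N m; omega)
    rw [Finset.sum_eq_single (N / m)]
    · rw [hterm, if_pos (by rw [Nat.div_mul_cancel hdvd])]
      rfl
    · intro n _ hne
      rw [hterm]
      have : ¬ (N = n * m) := by
        intro hNm
        exact hne (by rw [hNm, Nat.mul_div_cancel n (Nat.pos_of_ne_zero hm)])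
      rw [if_neg this, smul_zero]
    · intro hnot
      exact absurd hmem hnot
  · rw [if_neg hdvd]
    symm
    apply Finset.sum_eq_zero
    intro n _
    rw [hterm]
    have : ¬ (N = n * m) := fun hNm => hdvd ⟨n, by rw [hNm, Nat.mul_comm]⟩
    rw [if_neg this, smul_zero]

end Psi
end PentagonAux

/-- pentagon equation, simply-laced case: if `u·v = q²·v·u` then
`Ψ_q⁽¹⁾(v)·Ψ_q⁽¹⁾(u) = Ψ_q⁽¹⁾(u)·Ψ_q⁽²⁾(q⁻¹·u·v)·Ψ_q⁽¹⁾(v)` in `A[[T]]`. -/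
theorem pentagon_equation
    {K : Type*} [Field K] (q : K) (hq0 : q ≠ 0) (hq : ∀ n : ℕ, 1 ≤ n → q ^ n ≠ 1)
    {A : Type*} [Ring A] [Algebra K A]
    (u v : A) (huv : u * v = (q ^ 2) • (v * u)) :
    Psi A q 1 v * Psi A q 1 u = Psi A q 1 u * Psi A q 2 (q⁻¹ • (u * v)) * Psi A q 1 v := by
  classical
  set U : PowerSeries A := PowerSeries.monomial 1 u with hU
  set V : PowerSeries A := PowerSeries.monomial 1 v with hV
  have hU0 : PowerSeries.coeff 0 U = 0 := by
    rw [hU, PowerSeries.coeff_monomial, if_neg (by omega)]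
  have hV0 : PowerSeries.coeff 0 V = 0 := by
    rw [hV, PowerSeries.coeff_monomial, if_neg (by omega)]
  have hUV : U * V = (q ^ 2) • (V * U) := by
    rw [hU, hV, PentagonAux.monomial_mul_monomial', PentagonAux.monomial_mul_monomial',
      huv, PentagonAux.monomial_smul']
  have hW : q⁻¹ • (U * V) = PowerSeries.monomial 2 (q⁻¹ • (u * v)) := by
    rw [hU, hV, PentagonAux.monomial_mul_monomial', PentagonAux.monomial_smul']
  have hW0 : PowerSeries.coeff 0 (q⁻¹ • (U * V)) = 0 := by
    rw [hW, PowerSeries.coeff_monomial, if_neg (by omega)]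
  have hVU : V * U = ((q ^ 2)⁻¹) • (U * V) := by
    rw [hUV, smul_smul, inv_mul_cancel₀ (pow_ne_zero 2 hq0), one_smul]
  have hUW : U * (q⁻¹ • (U * V)) = (q ^ 2) • ((q⁻¹ • (U * V)) * U) := by
    have h1 : (U * V) * U = (q ^ 2)⁻¹ • (U * (U * V)) := by
      rw [mul_assoc, hVU, mul_smul_comm]
    rw [mul_smul_comm, smul_mul_assoc, h1, smul_smul, smul_smul]
    congr 1
    field_simp
  rw [PentagonAux.Psi_eq_Gf one_ne_zero v, PentagonAux.Psi_eq_Gf one_ne_zero u,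
    PentagonAux.Psi_eq_Gf two_ne_zero (q⁻¹ • (u * v)), ← hU, ← hV, ← hW]
  rw [PentagonAux.Gf_swap hq0 hq hU0 hV0 hUV]
  rw [PentagonAux.Gf_mul_Gf hq0 hq hU0 hW0 hUW]
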